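/- Let k ≥ 1 and let t_1,...,t_k, s be pairwise distinct complex numbers. Then the sum over all permutations π of {1,...,k} of 1/((t_{π(1)} - t_{π(2)})(t_{π(2)} - t_{π(3)})···(t_{π(k-1)} - t_{π(k)})(t_{π(k)} - s)) equals (-1)^k / ∏_{j=1}^k (s - t_j). -/

import Mathlib

open Finset

lemma prod_erase_eq_succAbove {M : Type*} [CommMonoid M] {n : ℕ} (i : Fin (n + 1))
    (g : Fin (n + 1) → M) :
    ∏ j : Fin n, g (i.succAbove j) = ∏ j ∈ univ.erase i, g j := by
  have himg : (univ : Finset (Fin n)).image i.succAbove = univ.erase i := by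
    ext j
    simp [Fin.exists_succAbove_eq_iff, eq_comm, Ne]
  rw [← himg, Finset.prod_image fun a _ b _ h => Fin.succAbove_right_injective h]

lemma partial_fraction (m : ℕ) (t : Fin (m + 1) → ℂ) (s : ℂ)
    (ht : Function.Injective t) (hs : ∀ j, s ≠ t j) :
    ∑ i, 1 / ((t i - s) * ∏ j ∈ univ.erase i, (t i - t j)) =
      -1 / ∏ j, (s - t j) := by
  have hP : ∀ j, s - t j ≠ 0 := fun j => sub_ne_zero_of_ne (hs j)
  have hPne : (∏ j, (s - t j)) ≠ 0 := prod_ne_zero_iff.mpr fun j _ => hP j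
  have hQ : ∀ i : Fin (m + 1), (∏ j ∈ univ.erase i, (t i - t j)) ≠ 0 := fun i =>
    prod_ne_zero_iff.mpr fun j hj =>
      sub_ne_zero_of_ne fun h => (mem_erase.mp hj).1 (ht h).symm
  have h1 : ∑ i : Fin (m + 1), Polynomial.eval s (Lagrange.basis univ t i) = 1 := by
    rw [← Polynomial.eval_finset_sum, Lagrange.sum_basis ht.injOn univ_nonempty,
      Polynomial.eval_one]
  have h2 : ∀ i : Fin (m + 1), Polynomial.eval s (Lagrange.basis univ t i)
      = (∏ j ∈ univ.erase i, (t i - t j))⁻¹ * ∏ j ∈ univ.erase i, (s - t j) := by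
    intro i
    simp [Lagrange.basis, Lagrange.basisDivisor, Polynomial.eval_prod, Finset.prod_mul_distrib]
  have h3 : ∀ i : Fin (m + 1),
      1 / ((t i - s) * ∏ j ∈ univ.erase i, (t i - t j))
        = Polynomial.eval s (Lagrange.basis univ t i) / (-∏ j, (s - t j)) := by
    intro i
    rw [h2 i]
    have hp : (s - t i) * ∏ j ∈ univ.erase i, (s - t j) = ∏ j, (s - t j) :=
      Finset.mul_prod_erase univ (fun j => s - t j) (mem_univ i)
    have hR : (∏ j ∈ univ.erase i, (s - t j)) ≠ 0 :=
      prod_ne_zero_iff.mpr fun j _ => hP j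
    have hts : t i - s ≠ 0 := sub_ne_zero_of_ne (Ne.symm (hs i))
    rw [← hp]
    rw [div_eq_div_iff (mul_ne_zero hts (hQ i))
      (neg_ne_zero.mpr (mul_ne_zero (hP i) hR)), one_mul]
    have hring : (∏ j ∈ univ.erase i, (t i - t j))⁻¹ * (∏ j ∈ univ.erase i, (s - t j)) *
        ((t i - s) * ∏ j ∈ univ.erase i, (t i - t j))
        = ((∏ j ∈ univ.erase i, (t i - t j))⁻¹ * (∏ j ∈ univ.erase i, (t i - t j))) *
          ((∏ j ∈ univ.erase i, (s - t j)) * (t i - s)) := by ring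
    rw [hring, inv_mul_cancel₀ (hQ i), one_mul]
    ring
  rw [Finset.sum_congr rfl fun i _ => h3 i, ← Finset.sum_div, h1]
  rw [div_neg, neg_div]

/-- extend a permutation of `Fin (n+1)` to `Fin (n+2)` sending `last` to `i`. -/
def permExt (n : ℕ) (i : Fin (n + 2)) (σ : Equiv.Perm (Fin (n + 1))) :
    Equiv.Perm (Fin (n + 2)) :=
  (finSuccEquiv' (Fin.last (n + 1))).trans ((Equiv.optionCongr σ).trans
    (finSuccEquiv' i).symm)

lemma permExt_last (n : ℕ) (i : Fin (n + 2)) (σ : Equiv.Perm (Fin (n + 1))) :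
    permExt n i σ (Fin.last (n + 1)) = i := by
  simp [permExt, finSuccEquiv'_at]

lemma permExt_castSucc (n : ℕ) (i : Fin (n + 2)) (σ : Equiv.Perm (Fin (n + 1)))
    (m : Fin (n + 1)) :
    permExt n i σ m.castSucc = i.succAbove (σ m) := by
  simp [permExt, finSuccEquiv'_last_apply_castSucc]

lemma permExt_bijective (n : ℕ) :
    Function.Bijective (fun p : Fin (n + 2) × Equiv.Perm (Fin (n + 1)) =>
      permExt n p.1 p.2) := by
  rw [Fintype.bijective_iff_injective_and_card]
  constructor
  · rintro ⟨i, σ⟩ ⟨i', σ'⟩ h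
    simp only at h
    have hi : i = i' := by
      rw [← permExt_last n i σ, ← permExt_last n i' σ', h]
    subst hi
    have hσ : σ = σ' := by
      ext m
      have := Equiv.ext_iff.mp h m.castSucc
      rw [permExt_castSucc, permExt_castSucc] at this
      exact congrArg Fin.val (Fin.succAbove_right_injective this)
    rw [hσ]
  · simp [Fintype.card_perm, Nat.factorial_succ]

/-- Identity (III): symmetrization of the chain product with endpoint `s`. -/
theorem identity_III (n : ℕ) (t : Fin (n + 1) → ℂ) (s : ℂ)
    (ht : Function.Injective t) (hs : ∀ j, s ≠ t j) :
    ∑ π : Equiv.Perm (Fin (n + 1)),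
      1 / ((∏ i : Fin n, (t (π i.castSucc) - t (π i.succ))) *
        (t (π (Fin.last n)) - s))
    = (-1) ^ (n + 1) / ∏ j, (s - t j) := by
  induction n generalizing s with
  | zero =>
    have h0 : ∀ π : Equiv.Perm (Fin 1), π (Fin.last 0) = 0 := fun π =>
      Subsingleton.elim _ _
    have hts : s - t 0 ≠ 0 := sub_ne_zero_of_ne (hs 0)
    simp only [h0, Fin.prod_univ_zero, one_mul]
    rw [Finset.sum_const, Finset.card_univ]
    simp only [Fintype.card_perm, Fintype.card_fin, Nat.factorial_one, one_smul,
      Fin.prod_univ_one, pow_one]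
    field_simp
    rw [show (∏ x : Fin (0 + 1), (s - t x)) = s - t 0 from by simp,
      show t 0 - s = -(s - t 0) from by ring, div_neg]
    simp [neg_div]
  | succ n IH =>
    have key : ∀ (i : Fin (n + 2)) (σ : Equiv.Perm (Fin (n + 1))),
        (1 : ℂ) / ((∏ m : Fin (n + 1),
            (t (permExt n i σ m.castSucc) - t (permExt n i σ m.succ))) *
          (t (permExt n i σ (Fin.last (n + 1))) - s))
        = (1 / ((∏ m : Fin n, ((t ∘ i.succAbove) (σ m.castSucc) -
              (t ∘ i.succAbove) (σ m.succ))) *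
            ((t ∘ i.succAbove) (σ (Fin.last n)) - t i))) * (1 / (t i - s)) := by
      intro i σ
      rw [Fin.prod_univ_castSucc, permExt_last]
      have h1 : ∀ m : Fin n,
          t (permExt n i σ m.castSucc.castSucc) - t (permExt n i σ m.castSucc.succ)
          = (t ∘ i.succAbove) (σ m.castSucc) - (t ∘ i.succAbove) (σ m.succ) := by
        intro m
        rw [Fin.succ_castSucc, permExt_castSucc, permExt_castSucc]
        rfl
      rw [Finset.prod_congr rfl fun m _ => h1 m]
      have h2 : t (permExt n i σ (Fin.last n).castSucc) -
            t (permExt n i σ (Fin.last n).succ)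
          = (t ∘ i.succAbove) (σ (Fin.last n)) - t i := by
        rw [Fin.succ_last, permExt_castSucc, permExt_last]
        rfl
      rw [h2]
      rw [one_div, one_div, one_div, mul_inv, mul_inv]
    rw [← Fintype.sum_bijective _ (permExt_bijective n)
      (fun p => (1 : ℂ) / ((∏ m : Fin (n + 1),
          (t (permExt n p.1 p.2 m.castSucc) - t (permExt n p.1 p.2 m.succ))) *
        (t (permExt n p.1 p.2 (Fin.last (n + 1))) - s)))
      _ (fun p => rfl)]
    rw [Fintype.sum_prod_type]
    have step1 : ∀ i : Fin (n + 2),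
        ∑ σ : Equiv.Perm (Fin (n + 1)), (1 : ℂ) / ((∏ m : Fin (n + 1),
            (t (permExt n i σ m.castSucc) - t (permExt n i σ m.succ))) *
          (t (permExt n i σ (Fin.last (n + 1))) - s))
        = ((-1) ^ (n + 1) / ∏ j ∈ univ.erase i, (t i - t j)) * (1 / (t i - s)) := by
      intro i
      rw [Finset.sum_congr rfl fun σ _ => key i σ, ← Finset.sum_mul]
      have ht' : Function.Injective (t ∘ i.succAbove) :=
        ht.comp Fin.succAbove_right_injective
      have hs' : ∀ j, t i ≠ (t ∘ i.succAbove) j := fun j h =>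
        (Fin.succAbove_ne i j) (ht h).symm
      rw [IH (t ∘ i.succAbove) (t i) ht' hs']
      simp only [Function.comp_apply]
      rw [prod_erase_eq_succAbove i (fun j => t i - t j)]
    rw [Finset.sum_congr rfl fun i _ => step1 i]
    have step2 : ∀ i : Fin (n + 2),
        ((-1 : ℂ) ^ (n + 1) / ∏ j ∈ univ.erase i, (t i - t j)) * (1 / (t i - s))
        = (-1) ^ (n + 1) * (1 / ((t i - s) * ∏ j ∈ univ.erase i, (t i - t j))) := by
      intro i
      rw [div_mul_div_comm, mul_one,
        mul_comm (∏ j ∈ univ.erase i, (t i - t j)) (t i - s), div_eq_mul_one_div]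
    rw [Finset.sum_congr rfl fun i _ => step2 i, ← Finset.mul_sum,
      partial_fraction (n + 1) t s ht hs]
    rw [pow_succ]
    ring
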